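/- Fix N > 0, σ > 0, and a real m ∈ (0, N). With η(m, τ) := 2Φ(−t) + ((N−m)/m)·t·φ(t) for τ ≠ 0, where t := √m·|τ|/(2σ), the uniform marginal cost–benefit bound sup_{τ ∈ ℝ, τ ≠ 0} η(m, τ) ≤ 1 holds if and only if m ≥ N/3. Hence the continuous-relaxation Gaussian worst-case marginal benefit threshold is exactly m = N/3. -/

import Mathlib

open Real MeasureTheory Set

/-- The standard normal density `φ`. -/
noncomputable def stdGaussPDF (x : ℝ) : ℝ :=
  (Real.sqrt (2 * Real.pi))⁻¹ * Real.exp (-x ^ 2 / 2)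

/-- The standard normal distribution function `Φ`. -/
noncomputable def stdGaussCDF (t : ℝ) : ℝ :=
  ∫ x in Set.Iic t, stdGaussPDF x

/-- The Gaussian limit function `f_k(t) = 2Φ(−t) + k t φ(t)`. -/
noncomputable def fG (k t : ℝ) : ℝ :=
  2 * stdGaussCDF (-t) + k * t * stdGaussPDF t

/-- The continuous-relaxation Gaussian marginal ratio
`η(m, τ) = 2Φ(−t) + ((N − m)/m) t φ(t)`, `t = √m|τ|/(2σ)`, for `τ ≠ 0`. -/
noncomputable def etaGauss (N σ : ℝ) (m τ : ℝ) : ℝ :=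
  fG ((N - m) / m) (Real.sqrt m * |τ| / (2 * σ))

lemma sqrt2pi_pos : 0 < Real.sqrt (2 * Real.pi) :=
  Real.sqrt_pos.mpr (by positivity)

lemma pdf_pos (x : ℝ) : 0 < stdGaussPDF x := by
  unfold stdGaussPDF
  have := sqrt2pi_pos
  positivity

lemma pdf_le (x : ℝ) : stdGaussPDF x ≤ (Real.sqrt (2 * Real.pi))⁻¹ := by
  unfold stdGaussPDF
  have h1 : Real.exp (-x ^ 2 / 2) ≤ 1 := Real.exp_le_one_iff.mpr (by nlinarith [sq_nonneg x])
  nlinarith [inv_pos.mpr sqrt2pi_pos]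

lemma pdf_even (x : ℝ) : stdGaussPDF (-x) = stdGaussPDF x := by
  unfold stdGaussPDF; rw [neg_pow]; ring_nf

lemma continuous_pdf : Continuous stdGaussPDF := by
  unfold stdGaussPDF
  exact continuous_const.mul ((continuous_pow 2).neg.div_const 2).rexp

lemma integrable_pdf : Integrable stdGaussPDF := by
  have h : Integrable (fun x : ℝ => Real.exp (-(1/2 : ℝ) * x ^ 2)) :=
    integrable_exp_neg_mul_sq one_half_pos
  have h2 : Integrable (fun x : ℝ => (Real.sqrt (2 * Real.pi))⁻¹ *
      Real.exp (-(1/2 : ℝ) * x ^ 2)) := h.const_mul _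
  convert h2 using 2 with x
  unfold stdGaussPDF
  ring_nf

lemma integral_pdf : ∫ x : ℝ, stdGaussPDF x = 1 := by
  have h : ∫ x : ℝ, Real.exp (-(1/2 : ℝ) * x ^ 2) = Real.sqrt (Real.pi / (1/2)) :=
    integral_gaussian (1/2)
  have h2 : ∫ x : ℝ, stdGaussPDF x =
      (Real.sqrt (2 * Real.pi))⁻¹ * ∫ x : ℝ, Real.exp (-(1/2 : ℝ) * x ^ 2) := by
    rw [← integral_const_mul]
    congr 1 with x
    unfold stdGaussPDF
    ring_nf
  rw [h2, h]
  have : Real.pi / (1/2) = 2 * Real.pi := by ring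
  rw [this, inv_mul_cancel₀ (ne_of_gt sqrt2pi_pos)]

lemma cdf_zero : stdGaussCDF 0 = 1 / 2 := by
  have h1 : (∫ x in Iic (0:ℝ), stdGaussPDF x) = ∫ x in Ioi (0:ℝ), stdGaussPDF x := by
    have h0 := integral_comp_neg_Iic (0:ℝ) stdGaussPDF
    simp only [neg_zero] at h0
    rw [← h0]
    exact (setIntegral_congr_fun measurableSet_Iic fun x _ => pdf_even x).symm
  have h2 := intervalIntegral.integral_Iic_add_Ioi (b := (0:ℝ)) integrable_pdf.integrableOn
    integrable_pdf.integrableOn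
  rw [integral_pdf] at h2
  unfold stdGaussCDF
  linarith

lemma hasDerivAt_cdf (t : ℝ) : HasDerivAt stdGaussCDF (stdGaussPDF t) t := by
  have key : ∀ s : ℝ, stdGaussCDF s = stdGaussCDF 0 + ∫ x in (0:ℝ)..s, stdGaussPDF x := by
    intro s
    have := intervalIntegral.integral_Iic_sub_Iic (μ := volume) (f := stdGaussPDF)
      integrable_pdf.integrableOn integrable_pdf.integrableOn (a := 0) (b := s)
    unfold stdGaussCDF
    linarith [this]
  have hd : HasDerivAt (fun s => stdGaussCDF 0 + ∫ x in (0:ℝ)..s, stdGaussPDF x)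
      (stdGaussPDF t) t :=
    ((continuous_pdf.integral_hasStrictDerivAt 0 t).hasDerivAt).const_add _
  exact hd.congr_of_eventuallyEq (Filter.Eventually.of_forall key)

lemma hasDerivAt_pdf (t : ℝ) : HasDerivAt stdGaussPDF (-t * stdGaussPDF t) t := by
  have h1 : HasDerivAt (fun x : ℝ => -x ^ 2 / 2) (-t) t := by
    have := ((hasDerivAt_pow 2 t).neg).div_const 2
    refine this.congr_deriv ?_
    simp; ring
  have h2 := (h1.exp).const_mul (Real.sqrt (2 * Real.pi))⁻¹
  refine h2.congr_deriv ?_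
  unfold stdGaussPDF
  ring

/-- Auxiliary: `g(t) = 1/2 − Φ(−t) − tφ(t)`, with `g' = t²φ(t)`. -/
noncomputable def gAux (t : ℝ) : ℝ := 1 / 2 - stdGaussCDF (-t) - t * stdGaussPDF t

lemma hasDerivAt_gAux (t : ℝ) : HasDerivAt gAux (t ^ 2 * stdGaussPDF t) t := by
  have h1 : HasDerivAt (fun s : ℝ => stdGaussCDF (-s)) (-stdGaussPDF t) t := by
    have := (hasDerivAt_cdf (-t)).comp t (hasDerivAt_neg t)
    simp only [pdf_even, mul_neg, mul_one] at this
    exact this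
  have h2 : HasDerivAt (fun s : ℝ => s * stdGaussPDF s)
      (1 * stdGaussPDF t + t * (-t * stdGaussPDF t)) t :=
    (hasDerivAt_id t).mul (hasDerivAt_pdf t)
  have h3 := ((h1.const_sub (1/2 : ℝ)).sub h2)
  refine h3.congr_deriv ?_
  ring

lemma gAux_zero : gAux 0 = 0 := by
  simp [gAux, cdf_zero]

lemma gAux_eq_integral (t : ℝ) : gAux t = ∫ s in (0:ℝ)..t, s ^ 2 * stdGaussPDF s := by
  have hc : Continuous fun s : ℝ => s ^ 2 * stdGaussPDF s :=
    (continuous_pow 2).mul continuous_pdf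
  have := intervalIntegral.integral_eq_sub_of_hasDerivAt
    (f := gAux) (f' := fun s => s ^ 2 * stdGaussPDF s) (a := 0) (b := t)
    (fun x _ => hasDerivAt_gAux x) (hc.intervalIntegrable 0 t)
  rw [this, gAux_zero, sub_zero]

lemma gAux_nonneg {t : ℝ} (ht : 0 ≤ t) : 0 ≤ gAux t := by
  rw [gAux_eq_integral]
  exact intervalIntegral.integral_nonneg ht fun s _ => mul_nonneg (sq_nonneg s) (pdf_pos s).le

lemma gAux_le {t : ℝ} (ht : 0 ≤ t) :
    gAux t ≤ (Real.sqrt (2 * Real.pi))⁻¹ * t ^ 3 / 3 := by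
  rw [gAux_eq_integral]
  have hc : Continuous fun s : ℝ => s ^ 2 * stdGaussPDF s :=
    (continuous_pow 2).mul continuous_pdf
  have hc2 : Continuous fun s : ℝ => (Real.sqrt (2 * Real.pi))⁻¹ * s ^ 2 :=
    continuous_const.mul (continuous_pow 2)
  have hmono : ∫ s in (0:ℝ)..t, s ^ 2 * stdGaussPDF s ≤
      ∫ s in (0:ℝ)..t, (Real.sqrt (2 * Real.pi))⁻¹ * s ^ 2 := by
    apply intervalIntegral.integral_mono_on ht (hc.intervalIntegrable 0 t)
      (hc2.intervalIntegrable 0 t)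
    intro s hs
    have := pdf_le s
    nlinarith [sq_nonneg s, pdf_pos s]
  have hval : ∫ s in (0:ℝ)..t, (Real.sqrt (2 * Real.pi))⁻¹ * s ^ 2 =
      (Real.sqrt (2 * Real.pi))⁻¹ * (t ^ 3 / 3) := by
    rw [intervalIntegral.integral_const_mul, integral_pow]
    norm_num
  rw [hval] at hmono
  linarith

lemma fG_eq (k t : ℝ) : fG k t = 1 - 2 * gAux t + (k - 2) * (t * stdGaussPDF t) := by
  unfold fG gAux
  ring

/-- Exact Gaussian rule of thirds: the uniform marginal cost–benefit bound
`sup_{τ ≠ 0} η(m, τ) ≤ 1` holds if and only if `m ≥ N/3`; hence the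
continuous-relaxation Gaussian WMB threshold is exactly `m = N/3`. -/
theorem gaussian_rule_of_thirds (N σ : ℝ) (hN : 0 < N) (hσ : 0 < σ)
    (m : ℝ) (hm : m ∈ Set.Ioo 0 N) :
    (∀ τ : ℝ, τ ≠ 0 → etaGauss N σ m τ ≤ 1) ↔ N / 3 ≤ m := by
  obtain ⟨hm0, hmN⟩ := hm
  set k := (N - m) / m with hk_def
  constructor
  · intro h
    by_contra hlt
    push_neg at hlt
    have hk2 : 2 < k := by
      rw [hk_def, lt_div_iff₀ hm0]
      linarith
    set δ := (3 / 2) * (k - 2) * Real.exp (-(1/2) : ℝ) with hδ_def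
    have hδ0 : 0 < δ := by
      have : 0 < k - 2 := by linarith
      positivity
    set t := min 1 (Real.sqrt δ / 2) with ht_def
    have hsδ : 0 < Real.sqrt δ := Real.sqrt_pos.mpr hδ0
    have ht0 : 0 < t := lt_min one_pos (by positivity)
    have ht1 : t ≤ 1 := min_le_left _ _
    have ht2 : t ^ 2 < δ := by
      have h1 : t ≤ Real.sqrt δ / 2 := min_le_right _ _
      have h2 : t ^ 2 ≤ (Real.sqrt δ / 2) ^ 2 := by nlinarith
      have h3 : (Real.sqrt δ / 2) ^ 2 = δ / 4 := by
        rw [div_pow, Real.sq_sqrt hδ0.le]; norm_num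
      nlinarith
    set τ := 2 * σ * t / Real.sqrt m with hτ_def
    have hsm : 0 < Real.sqrt m := Real.sqrt_pos.mpr hm0
    have hτ0 : 0 < τ := by positivity
    have harg : Real.sqrt m * |τ| / (2 * σ) = t := by
      rw [abs_of_pos hτ0, hτ_def]
      field_simp
    have hη := h τ (ne_of_gt hτ0)
    rw [etaGauss, harg, ← hk_def] at hη
    -- now show fG k t > 1
    have hexp : Real.exp (-(1/2) : ℝ) ≤ Real.exp (-t ^ 2 / 2) := by
      apply Real.exp_le_exp.mpr
      nlinarith
    have hpdf_lb : (Real.sqrt (2 * Real.pi))⁻¹ * Real.exp (-(1/2) : ℝ) ≤ stdGaussPDF t := by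
      unfold stdGaussPDF
      have := inv_pos.mpr sqrt2pi_pos
      nlinarith
    have hgle := gAux_le ht0.le
    have hkey : 1 < fG k t := by
      rw [fG_eq]
      have c := inv_pos.mpr sqrt2pi_pos
      have hstep : 2 * gAux t < (k - 2) * (t * stdGaussPDF t) := by
        have h1 : 2 * gAux t ≤ 2 * ((Real.sqrt (2 * Real.pi))⁻¹ * t ^ 3 / 3) := by linarith
        have h2 : (k - 2) * (t * ((Real.sqrt (2 * Real.pi))⁻¹ * Real.exp (-(1/2) : ℝ)))
            ≤ (k - 2) * (t * stdGaussPDF t) := by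
          apply mul_le_mul_of_nonneg_left _ (by linarith)
          exact mul_le_mul_of_nonneg_left hpdf_lb ht0.le
        have h3 : 2 * ((Real.sqrt (2 * Real.pi))⁻¹ * t ^ 3 / 3)
            < (k - 2) * (t * ((Real.sqrt (2 * Real.pi))⁻¹ * Real.exp (-(1/2) : ℝ))) := by
          have ht2' : t ^ 2 < (3 / 2) * (k - 2) * Real.exp (-(1/2) : ℝ) := ht2
          nlinarith [mul_pos c ht0]
        linarith
      linarith
    linarith
  · intro hge τ hτ
    have hk2 : k ≤ 2 := by
      rw [hk_def, div_le_iff₀ hm0]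
      linarith
    show fG k (Real.sqrt m * |τ| / (2 * σ)) ≤ 1
    set t := Real.sqrt m * |τ| / (2 * σ) with ht_def
    have ht0 : 0 ≤ t := by positivity
    have hg := gAux_nonneg ht0
    rw [fG_eq]
    have hpos : 0 ≤ t * stdGaussPDF t := mul_nonneg ht0 (pdf_pos t).le
    nlinarith
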